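/- For Re λ > 0 and j ∈ λ - ρ + ℕ (so that λ-ρ+1-j ∈ -ℕ₀), the function φ_{λ,j}(t) = (cosh t)^{-λ-ρ} F(λ+ρ+j, λ-ρ+1-j; 1+λ; (1+e^{2t})^{-1}) belongs to L²(ℝ, cosh^{n-1}t dt). -/

import Mathlib

noncomputable def poch (a : ℂ) (m : ℕ) : ℂ := (ascPochhammer ℂ m).eval a

noncomputable def hyp (a b c x : ℂ) : ℂ :=
  ∑' m : ℕ, poch a m * poch b m / (m.factorial * poch c m) * x ^ m

open MeasureTheory Real Finset Asymptotics

lemma integrable_cosh_rpow_neg {a : ℝ} (ha : 0 < a) :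
    Integrable (fun t : ℝ => Real.cosh t ^ (-a)) := by
  have hcont : Continuous (fun t : ℝ => Real.cosh t ^ (-a)) :=
    Real.continuous_cosh.rpow_const (fun t => Or.inl (Real.cosh_pos t).ne')
  apply hcont.locallyIntegrable.integrable_of_isBigO_atTop_of_norm_isNegInvariant
    (g := fun t : ℝ => Real.exp (-a * t))
  · exact ae_of_all _ (fun t => by simp [Real.cosh_neg])
  · apply IsBigO.of_bound ((2:ℝ) ^ a)
    filter_upwards [Filter.eventually_ge_atTop (0:ℝ)] with t ht
    have h1 : Real.exp t / 2 ≤ Real.cosh t := by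
      rw [Real.cosh_eq]
      have := Real.exp_pos (-t)
      linarith
    have h2 : Real.cosh t ^ (-a) ≤ (Real.exp t / 2) ^ (-a) :=
      Real.rpow_le_rpow_of_nonpos (by positivity) h1 (by linarith)
    have h3 : (Real.exp t / 2) ^ (-a) = 2 ^ a * Real.exp (-a * t) := by
      rw [Real.div_rpow (Real.exp_pos t).le (by norm_num), ← Real.exp_mul,
        Real.rpow_neg (by norm_num : (0:ℝ) ≤ 2), div_eq_mul_inv, inv_inv,
        mul_comm t (-a), mul_comm]
    rw [Real.norm_eq_abs, Real.norm_eq_abs, abs_of_nonneg (Real.rpow_nonneg (Real.cosh_pos t).le _),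
      abs_of_nonneg (Real.exp_pos _).le]
    calc Real.cosh t ^ (-a) ≤ (Real.exp t / 2) ^ (-a) := h2
      _ = 2 ^ a * Real.exp (-a * t) := h3
  · exact ⟨Set.Ioi 0, Filter.Ioi_mem_atTop 0, exp_neg_integrableOn_Ioi 0 ha⟩

theorem stmt12 (n : ℕ) (hn : 3 ≤ n) (ρ : ℝ) (hρ : ρ = (n - 1) / 2)
    (lam : ℂ) (hre : 0 < lam.re) (hlam : ∀ m : ℕ, lam ≠ -((m : ℂ) + 1))
    (j : ℕ) (hj : ∃ m : ℕ, lam - ρ + 1 - j = -(m : ℂ))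
    (φ : ℝ → ℂ)
    (hφ : φ = fun t => ((Real.cosh t : ℂ)) ^ (-lam - ρ) *
      hyp (lam + ρ + j) (lam - ρ + 1 - j) (1 + lam) (((1 + Real.exp (2*t))⁻¹ : ℝ))) :
    MeasureTheory.Integrable (fun t : ℝ => ‖φ t‖ ^ 2 * Real.cosh t ^ ((n : ℝ) - 1)) := by
  obtain ⟨m, hm⟩ := hj
  set a := lam + (ρ:ℂ) + j with ha
  set b := lam - (ρ:ℂ) + 1 - j with hb
  set c := 1 + lam with hc
  -- the hypergeometric series terminates
  have hyp_eq : ∀ x : ℂ, hyp a b c x =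
      ∑ k ∈ Finset.range (m+1), poch a k * poch b k / (k.factorial * poch c k) * x ^ k := by
    intro x
    apply tsum_eq_sum
    intro k hk
    have hk' : m < k := by
      by_contra h
      exact hk (Finset.mem_range.mpr (by omega))
    have hz : poch b k = 0 := by
      have : b = -(m:ℂ) := hm
      rw [this]
      exact ascPochhammer_eval_neg_coe_nat_of_lt hk'
    simp [poch] at hz ⊢
    simp [hz]
  set C : ℝ := ∑ k ∈ Finset.range (m+1), ‖poch a k * poch b k / (k.factorial * poch c k)‖
    with hC
  have hCnn : 0 ≤ C := Finset.sum_nonneg fun k _ => norm_nonneg _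
  have hhypbound : ∀ x : ℂ, ‖x‖ ≤ 1 → ‖hyp a b c x‖ ≤ C := by
    intro x hx
    rw [hyp_eq]
    refine (norm_sum_le _ _).trans (Finset.sum_le_sum fun k _ => ?_)
    rw [norm_mul, norm_pow]
    exact mul_le_of_le_one_right (norm_nonneg _) (pow_le_one₀ (norm_nonneg _) hx)
  have hxnorm : ∀ t : ℝ, ‖(((1 + Real.exp (2*t))⁻¹ : ℝ) : ℂ)‖ ≤ 1 := by
    intro t
    rw [Complex.norm_real, Real.norm_eq_abs, abs_of_nonneg (by positivity)]
    have h1 : (1:ℝ) ≤ 1 + Real.exp (2*t) := by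
      have := Real.exp_pos (2*t); linarith
    exact inv_le_one_of_one_le₀ h1
  have hφbound : ∀ t : ℝ, ‖φ t‖ ≤ C * Real.cosh t ^ (-lam.re - ρ) := by
    intro t
    rw [hφ]
    simp only
    rw [norm_mul]
    have h1 : ‖((Real.cosh t : ℂ)) ^ (-lam - (ρ:ℂ))‖ = Real.cosh t ^ (-lam.re - ρ) := by
      rw [Complex.norm_cpow_eq_rpow_re_of_pos (Real.cosh_pos t)]
      congr 1
    rw [h1]
    calc Real.cosh t ^ (-lam.re - ρ) * ‖hyp a b c _‖
        ≤ Real.cosh t ^ (-lam.re - ρ) * C := by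
          exact mul_le_mul_of_nonneg_left (hhypbound _ (hxnorm t))
            (Real.rpow_nonneg (Real.cosh_pos t).le _)
      _ = C * Real.cosh t ^ (-lam.re - ρ) := mul_comm _ _
  -- continuity
  have hφcont : Continuous φ := by
    rw [hφ]
    apply Continuous.mul
    · apply Continuous.cpow
      · exact Complex.continuous_ofReal.comp Real.continuous_cosh
      · exact continuous_const
      · exact fun t => Complex.ofReal_mem_slitPlane.mpr (Real.cosh_pos t)
    · simp only [hyp_eq]
      apply continuous_finset_sum
      intro k _
      apply Continuous.mul continuous_const
      apply Continuous.pow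
      apply Complex.continuous_ofReal.comp
      have : Continuous fun t : ℝ => 1 + Real.exp (2*t) :=
        continuous_const.add (Real.continuous_exp.comp (continuous_const.mul continuous_id))
      exact this.inv₀ (fun t => by have := Real.exp_pos (2*t); positivity)
  have hmeas : Continuous (fun t : ℝ => ‖φ t‖ ^ 2 * Real.cosh t ^ ((n : ℝ) - 1)) :=
    (hφcont.norm.pow 2).mul
      (Real.continuous_cosh.rpow_const fun t => Or.inl (Real.cosh_pos t).ne')
  have hkey : (-lam.re - ρ) + (-lam.re - ρ) + ((n:ℝ) - 1) = -(2*lam.re) := by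
    rw [hρ]; ring
  have hbound : ∀ t : ℝ, ‖‖φ t‖ ^ 2 * Real.cosh t ^ ((n : ℝ) - 1)‖ ≤
      C^2 * Real.cosh t ^ (-(2*lam.re)) := by
    intro t
    have hc := Real.cosh_pos t
    rw [Real.norm_eq_abs, abs_of_nonneg (by positivity)]
    have h1 : ‖φ t‖^2 ≤ (C * Real.cosh t ^ (-lam.re - ρ))^2 :=
      pow_le_pow_left₀ (norm_nonneg _) (hφbound t) 2
    calc ‖φ t‖^2 * Real.cosh t ^ ((n : ℝ) - 1)
        ≤ (C * Real.cosh t ^ (-lam.re - ρ))^2 * Real.cosh t ^ ((n : ℝ) - 1) := by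
          exact mul_le_mul_of_nonneg_right h1 (Real.rpow_nonneg hc.le _)
      _ = C^2 * Real.cosh t ^ (-(2*lam.re)) := by
          rw [mul_pow, sq (Real.cosh t ^ (-lam.re - ρ)), ← Real.rpow_add hc,
            mul_assoc, ← Real.rpow_add hc, hkey]
  refine Integrable.mono' ((integrable_cosh_rpow_neg (by linarith)).const_mul (C^2))
    hmeas.aestronglyMeasurable (ae_of_all _ hbound)
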